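/- Let Π be a ground logic program over atoms A with rules indexed by a finite type R, and let T(Π) be its transformed program over the atom type A ⊎ R. If M' ⊆ A ⊎ R is a stable model of T(Π), then M = M' ∩ A (the set of original atoms in M') is a supported model of Π. -/
import Mathlib


/-- A ground rule: head ← body⁺, not body⁻. -/
structure Rule (A : Type*) where
  head : A
  bodyPos : Finset A
  bodyNeg : Finset A
deriving DecidableEq

/-- The body of rule `r` is true in interpretation `M`:
`body⁺(r) ⊆ M` and `body⁻(r) ∩ M = ∅`. -/
def BodyTrue {A : Type*} (M : Set A) (r : Rule A) : Prop :=
  ↑r.bodyPos ⊆ M ∧ ∀ a ∈ r.bodyNeg, a ∉ M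

/-- `M` is a model of the program `P` (a family of rules indexed by `R`). -/
def IsModel {A R : Type*} (P : R → Rule A) (M : Set A) : Prop :=
  ∀ r, BodyTrue M (P r) → (P r).head ∈ M

/-- `M` is a supported model of `P`: a model in which every true atom
is the head of some rule of `P` whose body is true in `M`. -/
def IsSupported {A R : Type*} (P : R → Rule A) (M : Set A) : Prop :=
  IsModel P M ∧ ∀ a ∈ M, ∃ r, (P r).head = a ∧ ↑(P r).bodyPos ⊆ M ∧
    ∀ b ∈ (P r).bodyNeg, b ∉ M

/-- `N` is a model of the Gelfond–Lifschitz reduct `P^M`: for every rule of `P`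
surviving the reduct (i.e. with `body⁻(r) ∩ M = ∅`), whose negative literals are
removed, if its positive body holds in `N` then so does its head. -/
def ReductModel {A R : Type*} (P : R → Rule A) (M N : Set A) : Prop :=
  ∀ r, (∀ a ∈ (P r).bodyNeg, a ∉ M) → ↑(P r).bodyPos ⊆ N → (P r).head ∈ N

/-- `M` is a stable model of `P`: `M` is the least model of the reduct `P^M`. -/
def IsStable {A R : Type*} (P : R → Rule A) (M : Set A) : Prop :=
  ReductModel P M M ∧ ∀ N, ReductModel P M N → M ⊆ N

/-- Index type for the rules of the transformed program `T(P)`: one rule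
`head(r) ← not dm_r` per rule `r`, one rule `dm_r ← not l` per `l ∈ body⁺(r)`,
and one rule `dm_r ← l` per `l ∈ body⁻(r)`. -/
abbrev TransIdx {A R : Type*} (P : R → Rule A) : Type _ :=
  R ⊕ ((Σ r : R, {l // l ∈ (P r).bodyPos}) ⊕ (Σ r : R, {l // l ∈ (P r).bodyNeg}))

/-- The transformed program `T(P)` over atoms `A ⊕ R`, where `Sum.inr r`
plays the role of the fresh auxiliary atom `dm_r`. -/
def Transform {A R : Type*} (P : R → Rule A) : TransIdx P → Rule (A ⊕ R)
  | Sum.inl r => ⟨Sum.inl (P r).head, ∅, {Sum.inr r}⟩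
  | Sum.inr (Sum.inl ⟨r, l⟩) => ⟨Sum.inr r, ∅, {Sum.inl l.1}⟩
  | Sum.inr (Sum.inr ⟨r, l⟩) => ⟨Sum.inr r, {Sum.inl l.1}, ∅⟩

/-- `Lift P M = M ∪ { dm_r | the body of rule r is false in M }`,
viewing `M ⊆ A` as a subset of `A ⊕ R` via the left injection. -/
def Lift {A R : Type*} (P : R → Rule A) (M : Set A) : Set (A ⊕ R) :=
  Sum.inl '' M ∪ Sum.inr '' {r | ¬ BodyTrue M (P r)}

/-- If `M'` is a stable model of `T(P)`, then `M = M' ∩ A`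
(the original atoms of `M'`, i.e. `Sum.inl ⁻¹' M'`) is a supported model of `P`. -/
theorem stable_model_of_transform_gives_supported_model
    {A R : Type*} [Fintype R] (P : R → Rule A) (M' : Set (A ⊕ R))
    (h : IsStable (Transform P) M') : IsSupported P (Sum.inl ⁻¹' M') := by
  obtain ⟨hred, hmin⟩ := h
  set M : Set A := Sum.inl ⁻¹' M' with hMdef
  -- M' ⊆ Lift P M
  have hLift : M' ⊆ Lift P M := by
    have hrm : ReductModel (Transform P) M' (Lift P M ∩ M') := by
      intro r hneg hpos
      match r with
      | Sum.inl r =>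
        have hhd : Sum.inl (P r).head ∈ M' := by
          apply hred (Sum.inl r)
          · simpa [Transform] using hneg
          · simp [Transform]
        exact ⟨Or.inl ⟨_, hhd, rfl⟩, hhd⟩
      | Sum.inr (Sum.inl ⟨r, l⟩) =>
        have hlM : Sum.inl l.1 ∉ M' := by
          have := hneg (Sum.inl l.1)
          simp [Transform] at this
          exact this
        have hr : Sum.inr r ∈ M' := by
          apply hred (Sum.inr (Sum.inl ⟨r, l⟩))
          · simpa [Transform] using hlM
          · simp [Transform]
        refine ⟨Or.inr ⟨r, fun hbt => hlM (hbt.1 l.2), rfl⟩, hr⟩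
      | Sum.inr (Sum.inr ⟨r, l⟩) =>
        have hlM : Sum.inl l.1 ∈ Lift P M ∩ M' := by
          apply hpos
          simp [Transform]
        have hr : Sum.inr r ∈ M' := by
          apply hred (Sum.inr (Sum.inr ⟨r, l⟩))
          · simp [Transform]
          · intro x hx
            simp [Transform] at hx
            subst hx
            exact hlM.2
        refine ⟨Or.inr ⟨r, fun hbt => hbt.2 l.1 l.2 hlM.2, rfl⟩, hr⟩
    exact fun x hx => (hmin _ hrm hx).1
  -- characterize inr r ∈ M'
  have hiff : ∀ r : R, Sum.inr r ∈ M' ↔ ¬ BodyTrue M (P r) := by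
    intro r
    constructor
    · intro hr
      rcases hLift hr with ⟨a, _, ha⟩ | ⟨s, hs, hseq⟩
      · exact absurd ha (by simp)
      · rcases Sum.inr_injective hseq with rfl
        exact hs
    · intro hbt
      rw [BodyTrue] at hbt
      push_neg at hbt
      by_cases hp : (↑(P r).bodyPos : Set A) ⊆ M
      · obtain ⟨l, hl, hlM⟩ := hbt hp
        apply hred (Sum.inr (Sum.inr ⟨r, ⟨l, hl⟩⟩))
        · simp [Transform]
        · intro x hx
          simp [Transform] at hx
          subst hx
          exact hlM
      · rw [Set.not_subset] at hp
        obtain ⟨l, hl, hlM⟩ := hp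
        apply hred (Sum.inr (Sum.inl ⟨r, ⟨l, by exact_mod_cast hl⟩⟩))
        · intro x hx
          simp [Transform] at hx
          subst hx
          exact hlM
        · simp [Transform]
  have hmodel : IsModel P M := by
    intro r hbt
    show Sum.inl (P r).head ∈ M'
    apply hred (Sum.inl r)
    · intro x hx
      simp [Transform] at hx
      subst hx
      exact fun hr => (hiff r).1 hr hbt
    · simp [Transform]
  refine ⟨hmodel, ?_⟩
  intro a ha
  by_contra hno
  push_neg at hno
  have hrm : ReductModel (Transform P) M' (M' \ {Sum.inl a}) := by
    intro r hneg hpos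
    match r with
    | Sum.inl r =>
      have hrr : Sum.inr r ∉ M' := by
        have := hneg (Sum.inr r)
        simp [Transform] at this
        exact this
      have hbt : BodyTrue M (P r) := by
        by_contra hb
        exact hrr ((hiff r).2 hb)
      have hhd : Sum.inl (P r).head ∈ M' := hmodel r hbt
      refine ⟨hhd, ?_⟩
      simp only [Set.mem_singleton_iff]
      intro heq
      have : (P r).head = a := Sum.inl_injective heq
      obtain ⟨b, hb, hbM⟩ := hno r this hbt.1
      exact hbt.2 b hb hbM
    | Sum.inr (Sum.inl ⟨r, l⟩) =>
      have hlM : Sum.inl l.1 ∉ M' := by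
        have := hneg (Sum.inl l.1)
        simp [Transform] at this
        exact this
      have hr : Sum.inr r ∈ M' := by
        apply hred (Sum.inr (Sum.inl ⟨r, l⟩))
        · simpa [Transform] using hlM
        · simp [Transform]
      exact ⟨hr, by simp [Transform]⟩
    | Sum.inr (Sum.inr ⟨r, l⟩) =>
      have hlM : Sum.inl l.1 ∈ M' \ {Sum.inl a} := by
        apply hpos
        simp [Transform]
      have hr : Sum.inr r ∈ M' := by
        apply hred (Sum.inr (Sum.inr ⟨r, l⟩))
        · simp [Transform]
        · intro x hx
          simp [Transform] at hx
          subst hx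
          exact hlM.1
      exact ⟨hr, by simp [Transform]⟩
  exact (hmin _ hrm ha).2 rfl
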